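/- Let ζ be a random variable with E[ζ] = 0, E[ζ²] = 1, and E[ζ⁴] ≤ C for some constant C ≥ 1 (uniform fourth-moment bound). Then for any reals m and r > 0, Var(log r − r(ζ − m)² + ζ²) ≤ (2C − 1)(1 − r)² + 4(C + 1)m²r². -/

import Mathlib

open MeasureTheory ProbabilityTheory

/-- If `E[ζ] = 0`, `E[ζ²] = 1` and `E[ζ⁴] ≤ C` with `C ≥ 1`, then for any `m` and `r > 0`,
`Var(log r − r(ζ − m)² + ζ²) ≤ (2C − 1)(1 − r)² + 4(C + 1)m²r²`. -/
theorem stmt_5 {Ω : Type*} [MeasurableSpace Ω] (μ : Measure Ω) [IsProbabilityMeasure μ]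
    (ζ : Ω → ℝ) (hζmeas : Measurable ζ)
    (hζ4 : MemLp ζ 4 μ)
    (hmean : ∫ ω, ζ ω ∂μ = 0) (hvar : ∫ ω, (ζ ω) ^ 2 ∂μ = 1)
    (C : ℝ) (hC : 1 ≤ C) (hmom4 : ∫ ω, (ζ ω) ^ 4 ∂μ ≤ C)
    (m r : ℝ) (hr : 0 < r) :
    variance (fun ω => Real.log r - r * (ζ ω - m) ^ 2 + (ζ ω) ^ 2) μ ≤
      (2 * C - 1) * (1 - r) ^ 2 + 4 * (C + 1) * m ^ 2 * r ^ 2 := by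
  set a : ℝ := 1 - r with ha
  set b : ℝ := 2 * m * r with hb
  set c : ℝ := Real.log r - r * m ^ 2 with hc
  -- Integrability of ζ⁴
  have hint4 : Integrable (fun ω => (ζ ω) ^ 4) μ := by
    have := hζ4.integrable_norm_rpow (by norm_num) (by norm_num)
    refine this.congr (ae_of_all _ fun ω => ?_)
    have h4 : ((4 : ENNReal)).toReal = ((4 : ℕ) : ℝ) := by norm_num
    simp only [h4, Real.rpow_natCast, Real.norm_eq_abs, ← abs_pow]
    exact abs_of_nonneg (by positivity)
  -- ζ² ∈ L²
  have hsq2 : MemLp (fun ω => (ζ ω) ^ 2) 2 μ := by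
    rw [memLp_two_iff_integrable_sq ((hζmeas.pow_const 2).aestronglyMeasurable)]
    refine hint4.congr (ae_of_all _ fun ω => ?_)
    ring
  have hζ2 : MemLp ζ 2 μ := hζ4.mono_exponent (by norm_num)
  have hintsq : Integrable (fun ω => (ζ ω) ^ 2) μ := hζ2.integrable_sq
  have hintζ : Integrable ζ μ := hζ2.integrable one_le_two
  -- rewrite the function
  have hXeq : (fun ω => Real.log r - r * (ζ ω - m) ^ 2 + (ζ ω) ^ 2)
      = fun ω => a * (ζ ω) ^ 2 + b * ζ ω + c := by
    funext ω; simp only [ha, hb, hc]; ring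
  have hX2 : MemLp (fun ω => a * (ζ ω) ^ 2 + b * ζ ω + c) 2 μ :=
    ((hsq2.const_mul a).add (hζ2.const_mul b)).add (memLp_const c)
  rw [hXeq]
  -- mean
  have hintY : Integrable (fun ω => a * (ζ ω) ^ 2 + b * ζ ω) μ :=
    (hintsq.const_mul a).add (hintζ.const_mul b)
  have hmeanX : (∫ ω, (a * (ζ ω) ^ 2 + b * ζ ω + c) ∂μ) = a + c := by
    rw [integral_add hintY (integrable_const c), integral_add (hintsq.const_mul a)
      (hintζ.const_mul b), integral_const_mul, integral_const_mul, hmean, hvar]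
    simp
  rw [(show variance (fun ω => a * (ζ ω) ^ 2 + b * ζ ω + c) μ = ∫ ω, ((((fun ω => a * (ζ ω) ^ 2 + b * ζ ω + c) - fun _ => ∫ x, (a * (ζ x) ^ 2 + b * ζ x + c) ∂μ) ^ (2 : ℕ) : Ω → ℝ)) ω ∂μ by
    rw [variance_eq_integral hX2.aestronglyMeasurable.aemeasurable]; rfl), hmeanX]
  have hYeq : ((fun ω => a * (ζ ω) ^ 2 + b * ζ ω + c) - fun _ => a + c) ^ (2 : ℕ)
      = fun ω => (a * ((ζ ω) ^ 2 - 1) + b * ζ ω) ^ 2 := by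
    funext ω; simp [Pi.sub_apply, Pi.pow_apply]; ring
  rw [hYeq]
  -- dominating integrand
  have hintD : Integrable (fun ω => 2 * a ^ 2 * ((ζ ω) ^ 2 - 1) ^ 2 + 2 * b ^ 2 * (ζ ω) ^ 2) μ := by
    have h1 : Integrable (fun ω => ((ζ ω) ^ 2 - 1) ^ 2) μ := by
      have : Integrable (fun ω => (ζ ω) ^ 4 - 2 * (ζ ω) ^ 2 + 1) μ :=
        (hint4.sub (hintsq.const_mul 2)).add (integrable_const 1)
      refine this.congr (ae_of_all _ fun ω => ?_); ring
    exact (h1.const_mul _).add (hintsq.const_mul _)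
  have hintL : Integrable (fun ω => (a * ((ζ ω) ^ 2 - 1) + b * ζ ω) ^ 2) μ := by
    have : MemLp (fun ω => a * ((ζ ω) ^ 2 - 1) + b * ζ ω) 2 μ :=
      ((hsq2.sub (memLp_const 1)).const_mul a).add (hζ2.const_mul b)
    exact this.integrable_sq
  have hle : (∫ ω, (a * ((ζ ω) ^ 2 - 1) + b * ζ ω) ^ 2 ∂μ)
      ≤ ∫ ω, (2 * a ^ 2 * ((ζ ω) ^ 2 - 1) ^ 2 + 2 * b ^ 2 * (ζ ω) ^ 2) ∂μ := by
    refine integral_mono hintL hintD fun ω => ?_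
    nlinarith [sq_nonneg (a * ((ζ ω) ^ 2 - 1) - b * ζ ω)]
  refine hle.trans ?_
  have hcalc : (∫ ω, (2 * a ^ 2 * ((ζ ω) ^ 2 - 1) ^ 2 + 2 * b ^ 2 * (ζ ω) ^ 2) ∂μ)
      = 2 * a ^ 2 * ((∫ ω, (ζ ω) ^ 4 ∂μ) - 1) + 2 * b ^ 2 := by
    have h1 : Integrable (fun ω => ((ζ ω) ^ 2 - 1) ^ 2) μ := by
      have : Integrable (fun ω => (ζ ω) ^ 4 - 2 * (ζ ω) ^ 2 + 1) μ :=
        (hint4.sub (hintsq.const_mul 2)).add (integrable_const 1)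
      refine this.congr (ae_of_all _ fun ω => ?_); ring
    rw [integral_add (h1.const_mul _) (hintsq.const_mul _), integral_const_mul,
      integral_const_mul, hvar]
    have h2 : (∫ ω, ((ζ ω) ^ 2 - 1) ^ 2 ∂μ) = (∫ ω, (ζ ω) ^ 4 ∂μ) - 1 := by
      have e0 : (fun ω => ((ζ ω) ^ 2 - 1) ^ 2)
          = fun ω => (ζ ω) ^ 4 - (2 * (ζ ω) ^ 2 - 1) := by funext ω; ring
      have hg : Integrable (fun ω => 2 * (ζ ω) ^ 2 - 1) μ :=
        (hintsq.const_mul 2).sub (integrable_const 1)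
      rw [e0, integral_sub hint4 hg,
        integral_sub (hintsq.const_mul 2) (integrable_const 1), integral_const_mul, hvar]
      simp
      norm_num
    rw [h2]; ring
  rw [hcalc]
  have ha2 : a ^ 2 = (1 - r) ^ 2 := by rw [ha]
  have hb2 : b ^ 2 = 4 * m ^ 2 * r ^ 2 := by rw [hb]; ring
  nlinarith [sq_nonneg a, sq_nonneg b, sq_nonneg (m * r)]
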